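/- For all complex numbers A, B with Re(conj(B)·A) = 1, all ε > 0, and all real a, η: the function x ↦ φ₀(A,B,ε²,a,η,x) has L²(ℝ) norm equal to 1, and the function x ↦ (x − a)·φ₀(A,B,ε²,a,η,x) has L²(ℝ) norm equal to ε|A|/√2. -/

import Mathlib

open MeasureTheory

/-- The Gaussian coherent state
`φ₀(A,B,ε²,a,η,x) := π^{-1/4} ε^{-1/2} A^{-1/2}
exp(−B(x−a)²/(2Aε²) + iη(x−a)/ε²)`, written in terms of `eps2 = ε²`
(so `ε^{-1/2} = eps2^{-1/4}`); `A^{-1/2}` uses the principal branch. -/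
noncomputable def phi0 (A B : ℂ) (eps2 : ℝ) (a η x : ℝ) : ℂ :=
  ((Real.pi ^ (-(1 / 4 : ℝ)) * eps2 ^ (-(1 / 4 : ℝ)) : ℝ) : ℂ) *
    A ^ (-(1 / 2) : ℂ) *
    Complex.exp (-(B * (((x - a : ℝ) : ℂ)) ^ 2) / (2 * A * (eps2 : ℂ)) +
      Complex.I * ((η * (x - a) : ℝ) : ℂ) / (eps2 : ℂ))

open Real Set

lemma aux_sq_gauss {b : ℝ} (hb : 0 < b) :
    ∫ x : ℝ, x ^ 2 * Real.exp (-b * x ^ 2) = Real.sqrt π / 2 * b ^ (-(3/2) : ℝ) := by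
  have h1 : (∫ x : ℝ, x ^ 2 * Real.exp (-b * x ^ 2))
      = 2 * ∫ x in Ioi (0:ℝ), x ^ 2 * Real.exp (-b * x ^ 2) := by
    rw [← integral_comp_abs (f := fun t => t ^ 2 * Real.exp (-b * t ^ 2))]
    simp [sq_abs]
  have h2 : ∀ x : ℝ, x ^ (2:ℝ) = x ^ 2 := fun x => by
    rw [show (2:ℝ) = ((2:ℕ):ℝ) by norm_num, Real.rpow_natCast]
  have h3 : (∫ x in Ioi (0:ℝ), x ^ 2 * Real.exp (-b * x ^ 2))
      = ∫ x in Ioi (0:ℝ), x ^ (2:ℝ) * Real.exp (-b * x ^ (2:ℝ)) := by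
    simp_rw [h2]
  rw [h1, h3, integral_rpow_mul_exp_neg_mul_rpow two_pos (by norm_num) hb]
  have hG : Real.Gamma ((2 + 1) / 2) = Real.sqrt π / 2 := by
    rw [show ((2:ℝ) + 1) / 2 = 1/2 + 1 by norm_num, Real.Gamma_add_one (by norm_num),
      Real.Gamma_one_half_eq]
    ring
  rw [hG]
  ring_nf

lemma aux_eLpNorm_two (F : ℝ → ℂ) (h : ℝ → ℝ) (hh : Integrable h) (heq : ∀ x, ‖F x‖ ^ 2 = h x) :
    eLpNorm F 2 volume = ENNReal.ofReal (Real.sqrt (∫ x, h x)) := by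
  have h0 : ∀ x, 0 ≤ h x := fun x => (heq x) ▸ sq_nonneg _
  rw [eLpNorm_eq_lintegral_rpow_enorm_toReal two_ne_zero ENNReal.ofNat_ne_top]
  have key : ∀ x : ℝ, ‖F x‖ₑ ^ (ENNReal.toReal 2) = ENNReal.ofReal (h x) := by
    intro x
    rw [ENNReal.toReal_ofNat, ← ofReal_norm,
      ENNReal.ofReal_rpow_of_nonneg (norm_nonneg _) (by norm_num)]
    congr 1
    rw [show ((2:ℝ)) = ((2:ℕ):ℝ) by norm_num, Real.rpow_natCast, heq x]
  simp_rw [key]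
  rw [← ofReal_integral_eq_lintegral_ofReal hh (Filter.Eventually.of_forall h0),
    ENNReal.ofReal_rpow_of_nonneg (integral_nonneg h0) (by norm_num)]
  congr 1
  rw [Real.sqrt_eq_rpow]
  norm_num

/-- For all complex `A, B` with `Re(conj B · A) = 1`, all `ε > 0`, and all real `a, η`:
`x ↦ φ₀(A,B,ε²,a,η,x)` has L²(ℝ) norm 1, and `x ↦ (x−a)φ₀(A,B,ε²,a,η,x)` has
L²(ℝ) norm `ε|A|/√2`. -/
theorem stmt_12 (A B : ℂ) (hAB : ((starRingEnd ℂ) B * A).re = 1)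
    (ε : ℝ) (hε : 0 < ε) (a η : ℝ) :
    eLpNorm (fun x : ℝ => phi0 A B (ε ^ 2) a η x) 2 volume = 1 ∧
    eLpNorm (fun x : ℝ => ((x - a : ℝ) : ℂ) * phi0 A B (ε ^ 2) a η x) 2 volume
      = ENNReal.ofReal (ε * ‖A‖ / Real.sqrt 2) := by
  have hA : A ≠ 0 := by
    intro h; rw [h, mul_zero] at hAB; simp at hAB
  set nA := ‖A‖ with hnA_def
  have hnA : 0 < nA := norm_pos_iff.mpr hA
  have he2 : (0:ℝ) < ε ^ 2 := by positivity
  have hBA : (B / A).re = (nA ^ 2)⁻¹ := by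
    have hns : Complex.normSq A = nA ^ 2 := (Complex.sq_norm A).symm
    have h1 : B.re * A.re + B.im * A.im = 1 := by
      simpa [Complex.mul_re] using hAB
    rw [Complex.div_re, hns, ← add_div, h1, one_div]
  set s := ε * nA with hs_def
  have hs : 0 < s := by positivity
  set b := (s ^ 2)⁻¹ with hb_def
  have hb : 0 < b := by positivity
  set C := (Real.sqrt Real.pi * s)⁻¹ with hC_def
  have hsqpi : (0:ℝ) < Real.sqrt Real.pi := Real.sqrt_pos.mpr Real.pi_pos
  -- squaring helpers
  have sq4 : ∀ t : ℝ, 0 < t → (t ^ (-(1/4) : ℝ)) ^ 2 = (Real.sqrt t)⁻¹ := by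
    intro t ht
    rw [← Real.rpow_natCast (t ^ (-(1/4):ℝ)) 2, ← Real.rpow_mul ht.le,
      Real.sqrt_eq_rpow, ← Real.rpow_neg ht.le]
    norm_num
  have sq2 : (nA ^ (-(1/2) : ℝ)) ^ 2 = nA⁻¹ := by
    rw [← Real.rpow_natCast (nA ^ (-(1/2):ℝ)) 2, ← Real.rpow_mul hnA.le]
    norm_num
    rw [Real.rpow_neg_one]
  -- pointwise squared norm
  have key : ∀ x : ℝ, ‖phi0 A B (ε^2) a η x‖ ^ 2 = C * Real.exp (-b * (x - a)^2) := by
    intro x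
    have hA2 : ((ε^2:ℝ):ℂ) ≠ 0 := by exact_mod_cast he2.ne'
    have e1 : -(B * (((x - a : ℝ) : ℂ)) ^ 2) / (2 * A * ((ε^2 : ℝ) : ℂ)) +
        Complex.I * ((η * (x - a) : ℝ) : ℂ) / ((ε^2 : ℝ) : ℂ)
        = (B / A) * ((-(x-a)^2 / (2 * ε^2) : ℝ) : ℂ)
          + ((η * (x - a) / ε^2 : ℝ) : ℂ) * Complex.I := by
      push_cast
      field_simp
      all_goals first
        | exact Or.inl trivial
        | ring
    have hre : (-(B * (((x - a : ℝ) : ℂ)) ^ 2) / (2 * A * ((ε^2 : ℝ) : ℂ)) +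
        Complex.I * ((η * (x - a) : ℝ) : ℂ) / ((ε^2 : ℝ) : ℂ)).re
        = -(b/2) * (x - a)^2 := by
      rw [e1, Complex.add_re, Complex.mul_re, Complex.ofReal_re, Complex.ofReal_im,
        Complex.mul_re, Complex.I_re, Complex.I_im, Complex.ofReal_re, Complex.ofReal_im, hBA]
      simp only [mul_zero, zero_mul, sub_zero, mul_one, zero_sub, neg_zero, add_zero]
      rw [hb_def, hs_def]
      field_simp
    have n1 : ‖((Real.pi ^ (-(1/4):ℝ) * (ε^2) ^ (-(1/4):ℝ) : ℝ) : ℂ)‖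
        = Real.pi ^ (-(1/4):ℝ) * (ε^2) ^ (-(1/4):ℝ) := by
      rw [Complex.norm_real, Real.norm_eq_abs, abs_of_pos (by positivity)]
    have n2 : ‖A ^ (-(1/2) : ℂ)‖ = nA ^ (-(1/2):ℝ) := by
      have hc : (-(1/2) : ℂ) = ((-(1/2):ℝ) : ℂ) := by norm_num
      rw [Complex.norm_cpow_of_ne_zero hA, hc,
        Complex.ofReal_re, Complex.ofReal_im, mul_zero, Real.exp_zero, div_one]
    have hnorm : ‖phi0 A B (ε^2) a η x‖
        = (Real.pi ^ (-(1/4):ℝ) * (ε^2) ^ (-(1/4):ℝ)) * nA ^ (-(1/2):ℝ)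
          * Real.exp (-(b/2) * (x - a)^2) := by
      rw [phi0, norm_mul, norm_mul, n1, n2, Complex.norm_exp, hre]
    rw [hnorm]
    rw [mul_pow, mul_pow, mul_pow, sq4 _ Real.pi_pos, sq4 _ he2, sq2,
      Real.sqrt_sq hε.le, ← Real.exp_nat_mul]
    rw [hC_def, hs_def]
    push_cast
    rw [mul_inv]
    congr 1
    · ring
    · congr 1; ring
  -- the base Gaussian is integrable
  have hint : Integrable (fun x : ℝ => C * Real.exp (-b * (x - a)^2)) :=
    ((integrable_exp_neg_mul_sq hb).comp_sub_right a).const_mul C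
  constructor
  · rw [aux_eLpNorm_two _ _ hint key]
    have : (∫ x : ℝ, C * Real.exp (-b * (x - a)^2)) = 1 := by
      rw [integral_const_mul, integral_sub_right_eq_self (fun y : ℝ => Real.exp (-b * y^2)) a,
        integral_gaussian]
      have hpb : π / b = π * s ^ 2 := by rw [hb_def]; field_simp
      rw [hpb, Real.sqrt_mul Real.pi_pos.le, Real.sqrt_sq hs.le, hC_def]
      field_simp
    rw [this, Real.sqrt_one, ENNReal.ofReal_one]
  · have hrp2 : ∀ x : ℝ, x ^ (2:ℝ) = x ^ 2 := fun x => by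
      rw [show (2:ℝ) = ((2:ℕ):ℝ) by norm_num, Real.rpow_natCast]
    have hg : Integrable (fun x : ℝ => x ^ 2 * Real.exp (-b * x ^ 2)) := by
      have h := integrable_rpow_mul_exp_neg_mul_sq hb (s := 2) (by norm_num)
      simp only [hrp2] at h
      exact h
    have hint2 : Integrable (fun x : ℝ => C * ((x - a) ^ 2 * Real.exp (-b * (x - a)^2))) :=
      (hg.comp_sub_right a).const_mul C
    have key2 : ∀ x : ℝ, ‖((x - a : ℝ) : ℂ) * phi0 A B (ε^2) a η x‖ ^ 2
        = C * ((x - a) ^ 2 * Real.exp (-b * (x - a)^2)) := by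
      intro x
      rw [norm_mul, mul_pow, key x, Complex.norm_real, Real.norm_eq_abs, sq_abs]
      ring
    rw [aux_eLpNorm_two _ _ hint2 key2]
    have hval : (∫ x : ℝ, C * ((x - a) ^ 2 * Real.exp (-b * (x - a)^2))) = s^2 / 2 := by
      rw [integral_const_mul,
        integral_sub_right_eq_self (fun y : ℝ => y ^ 2 * Real.exp (-b * y^2)) a,
        aux_sq_gauss hb]
      have hbs : b ^ (-(3/2) : ℝ) = s ^ 3 := by
        have h1 : b = s ^ ((-2 : ℝ)) := by
          rw [hb_def, Real.rpow_neg hs.le, show ((2:ℝ)) = ((2:ℕ):ℝ) by norm_num,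
            Real.rpow_natCast]
        rw [h1, ← Real.rpow_natCast s 3, ← Real.rpow_mul hs.le]
        norm_num
      rw [hbs, hC_def]
      field_simp
    rw [hval, Real.sqrt_div (sq_nonneg s), Real.sqrt_sq hs.le, hs_def]
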